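/- Suppose β = a (so β^b = a^b) and k ≥ 1. For all integers j ≥ 1 and n ≥ k: ∑_{m=0}^{j} C(j,m)·(−1)^{j−m}·Y_{n,a}(m;k,a,b) = (k!·(j−1)!/(2^{k−1}·a^b))·C(n,k)·S(n−k, j−1), where Y_{n,a}(m;k,a,b) denotes the evaluation of the polynomial Y_{n,a}(x;k,a,b) at x = m. -/

import Mathlib

open Polynomial

/-- The exponential generating series `e^{xt} = ∑_{n≥0} xⁿ tⁿ/n!` as a formal power series
in `t` with coefficients in `ℂ[x]`. -/
noncomputable def expX : PowerSeries (Polynomial ℂ) :=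
  PowerSeries.mk fun n => (n.factorial : ℂ)⁻¹ • (Polynomial.X : Polynomial ℂ) ^ n

/-- The exponential generating series `∑_{n≥0} Y_n tⁿ/n!` of a family of polynomials. -/
noncomputable def egf (Y : ℕ → Polynomial ℂ) : PowerSeries (Polynomial ℂ) :=
  PowerSeries.mk fun n => (n.factorial : ℂ)⁻¹ • Y n

/-- The defining identity for the unified Apostol-type polynomials with general constants:
`(B·e^t − A)^v · ∑_{n≥0} Y_n tⁿ/n! = (2^{1−k} t^k)^v · e^{xt}` as formal power series in `t`
over `ℂ[x]`. -/
def ApostolFamilyC (k v : ℕ) (B A : ℂ) (Y : ℕ → Polynomial ℂ) : Prop :=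
  (PowerSeries.C (R := Polynomial ℂ) (Polynomial.C B) * PowerSeries.exp (Polynomial ℂ)
      - PowerSeries.C (R := Polynomial ℂ) (Polynomial.C A)) ^ v * egf Y
    = (PowerSeries.C (R := Polynomial ℂ) (Polynomial.C ((2 : ℂ) ^ ((1 : ℤ) - (k : ℤ)))) *
        PowerSeries.X ^ k) ^ v * expX

/-- `Y` is the family of unified Apostol-type polynomials `Y_{n,β}^{(v)}(x;k,a,b)`:
here `β^b = exp(b·Log β)` is the principal complex power and `a^b` the real power. -/
def ApostolFamily (k v : ℕ) (a b : ℝ) (β : ℂ) (Y : ℕ → Polynomial ℂ) : Prop :=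
  ApostolFamilyC k v (β ^ (b : ℂ)) (((a ^ b : ℝ) : ℂ)) Y

/-- The Stirling numbers of the second kind, characterized by
`l!·S(p,l) = ∑_{i=0}^{l} (−1)^{l−i}·C(l,i)·i^p`. -/
noncomputable def stirling2 (p l : ℕ) : ℂ :=
  (l.factorial : ℂ)⁻¹ *
    ∑ i ∈ Finset.range (l + 1), (-1 : ℂ) ^ (l - i) * (l.choose i : ℂ) * (i : ℂ) ^ p

open PowerSeries

lemma aux_exp_sub_one_ne : exp ℂ - 1 ≠ 0 := by
  intro h
  have h1 := congrArg (PowerSeries.coeff (R := ℂ) 1) h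
  simp [coeff_exp] at h1

lemma aux_map_expX (z : ℂ) :
    PowerSeries.map (Polynomial.evalRingHom z) expX = rescale z (exp ℂ) := by
  ext n
  simp only [expX, PowerSeries.coeff_map, coeff_mk, coeff_rescale, coeff_exp]
  simp [Polynomial.eval_smul, smul_eq_mul]
  ring

lemma aux_bin (l : ℕ) :
    (exp ℂ - 1) ^ l =
      ∑ i ∈ Finset.range (l + 1),
        PowerSeries.C (R := ℂ) ((l.choose i : ℂ) * (-1 : ℂ) ^ (l - i)) * rescale (i : ℂ) (exp ℂ) := by
  rw [sub_pow]
  refine Finset.sum_congr rfl fun i hi => ?_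
  rw [Finset.mem_range] at hi
  rw [← exp_pow_eq_rescale_exp]
  have hsign : ((-1 : PowerSeries ℂ)) ^ (i + l) = PowerSeries.C (R := ℂ) ((-1 : ℂ) ^ (l - i)) := by
    have : (-1 : ℂ) ^ (i + l) = (-1 : ℂ) ^ (l - i) := by
      rw [show i + l = l - i + 2 * i by omega, pow_add, pow_mul]; simp
    rw [← this]
    push_cast [map_pow, map_neg, map_one]
    simp
  rw [hsign]
  have hc : ((l.choose i : PowerSeries ℂ)) = PowerSeries.C (R := ℂ) (l.choose i : ℂ) := by
    simp
  rw [hc, one_pow, map_mul]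
  ring

lemma aux_coeff_bin (p l : ℕ) :
    PowerSeries.coeff (R := ℂ) p ((exp ℂ - 1) ^ l) =
      (l.factorial : ℂ) * stirling2 p l * (p.factorial : ℂ)⁻¹ := by
  rw [aux_bin, map_sum, stirling2]
  have hfac : ((l.factorial : ℂ)) ≠ 0 := Nat.cast_ne_zero.2 l.factorial_ne_zero
  rw [Finset.mul_sum, Finset.mul_sum, Finset.sum_mul]
  refine Finset.sum_congr rfl fun i hi => ?_
  rw [PowerSeries.coeff_C_mul, coeff_rescale, coeff_exp]
  have : (algebraMap ℚ ℂ) (1 / (p.factorial : ℚ)) = (p.factorial : ℂ)⁻¹ := by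
    push_cast [map_div₀, map_one]
    simp
  rw [this]
  field_simp

/-- For `β = a`, `k ≥ 1`, `j ≥ 1` and `n ≥ k`:
`∑_{m=0}^{j} C(j,m)(−1)^{j−m} Y_{n,a}(m;k,a,b)
  = (k!(j−1)!/(2^{k−1} a^b)) C(n,k) S(n−k, j−1)`. -/
theorem apostol_pairing_formula_beta_eq_a (k : ℕ) (a b : ℝ)
    (ha : 0 < a) (hb : 0 < b) (hk : 1 ≤ k)
    (Y : ℕ → Polynomial ℂ) (hY : ApostolFamily k 1 a b (a : ℂ) Y)
    (j n : ℕ) (hj : 1 ≤ j) (hn : k ≤ n) :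
    ∑ m ∈ Finset.range (j + 1),
        (j.choose m : ℂ) * (-1 : ℂ) ^ (j - m) * (Y n).eval (m : ℂ)
      = (k.factorial : ℂ) * ((j - 1).factorial : ℂ) /
          ((2 : ℂ) ^ (k - 1) * ((a ^ b : ℝ) : ℂ)) *
          (n.choose k : ℂ) * stirling2 (n - k) (j - 1) := by
  classical
  set A : ℂ := ((a ^ b : ℝ) : ℂ) with hAdef
  set c : ℂ := (2 : ℂ) ^ ((1 : ℤ) - (k : ℤ)) with hcdef
  set l : ℕ := j - 1 with hldef
  set p : ℕ := n - k with hpdef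
  have hA0 : A ≠ 0 := by
    simp only [hAdef, Complex.ofReal_ne_zero]
    positivity
  have hpow : ((a : ℂ)) ^ (b : ℂ) = A := (Complex.ofReal_cpow ha.le b).symm
  have hY' : (PowerSeries.C (R := Polynomial ℂ) (Polynomial.C A) * exp (Polynomial ℂ)
        - PowerSeries.C (R := Polynomial ℂ) (Polynomial.C A)) * egf Y
      = PowerSeries.C (R := Polynomial ℂ) (Polynomial.C c) * PowerSeries.X ^ k * expX := by
    have h := hY
    unfold ApostolFamily ApostolFamilyC at h
    rw [hpow] at h
    simpa using h
  -- mapped identity at x = m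
  have hmap : ∀ m : ℕ,
      (PowerSeries.C (R := ℂ) A * exp ℂ - PowerSeries.C (R := ℂ) A) *
          PowerSeries.map (Polynomial.evalRingHom (m : ℂ)) (egf Y)
        = PowerSeries.C (R := ℂ) c * PowerSeries.X ^ k * rescale (m : ℂ) (exp ℂ) := by
    intro m
    have h := congrArg (PowerSeries.map (Polynomial.evalRingHom (m : ℂ))) hY'
    simpa [map_mul, map_sub, PowerSeries.map_C, map_pow, PowerSeries.map_X,
      aux_map_expX, PowerSeries.map_exp] using h
  set F : ℕ → PowerSeries ℂ :=
    fun m => PowerSeries.map (Polynomial.evalRingHom (m : ℂ)) (egf Y) with hFdef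
  set S : PowerSeries ℂ :=
    ∑ m ∈ Finset.range (j + 1),
      PowerSeries.C (R := ℂ) ((j.choose m : ℂ) * (-1 : ℂ) ^ (j - m)) * F m with hSdef
  have hsum : (PowerSeries.C (R := ℂ) A * exp ℂ - PowerSeries.C (R := ℂ) A) * S
      = PowerSeries.C (R := ℂ) c * PowerSeries.X ^ k * (exp ℂ - 1) ^ j := by
    rw [hSdef, Finset.mul_sum]
    have step : ∀ m ∈ Finset.range (j + 1),
        (PowerSeries.C (R := ℂ) A * exp ℂ - PowerSeries.C (R := ℂ) A) * (PowerSeries.C (R := ℂ) ((j.choose m : ℂ) * (-1 : ℂ) ^ (j - m)) * F m)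
          = PowerSeries.C (R := ℂ) ((j.choose m : ℂ) * (-1 : ℂ) ^ (j - m)) *
              (PowerSeries.C (R := ℂ) c * PowerSeries.X ^ k * rescale (m : ℂ) (exp ℂ)) := by
      intro m _
      rw [mul_left_comm, hmap m]
    rw [Finset.sum_congr rfl step, aux_bin j, Finset.mul_sum]
    exact Finset.sum_congr rfl fun m _ => by ring
  have hjl : j = l + 1 := by omega
  have hcancel : PowerSeries.C (R := ℂ) A * S = PowerSeries.C (R := ℂ) c * PowerSeries.X ^ k * (exp ℂ - 1) ^ l := by
    apply mul_left_cancel₀ aux_exp_sub_one_ne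
    calc (exp ℂ - 1) * (PowerSeries.C (R := ℂ) A * S) = (PowerSeries.C (R := ℂ) A * exp ℂ - PowerSeries.C (R := ℂ) A) * S := by ring
      _ = PowerSeries.C (R := ℂ) c * PowerSeries.X ^ k * (exp ℂ - 1) ^ j := hsum
      _ = (exp ℂ - 1) * (PowerSeries.C (R := ℂ) c * PowerSeries.X ^ k * (exp ℂ - 1) ^ l) := by
          rw [hjl, pow_succ]; ring
  have hcoeff := congrArg (PowerSeries.coeff (R := ℂ) n) hcancel
  have hFcoeff : ∀ m : ℕ, PowerSeries.coeff (R := ℂ) n (F m) = (n.factorial : ℂ)⁻¹ * (Y n).eval (m : ℂ) := by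
    intro m
    rw [hFdef]
    simp [PowerSeries.coeff_map, egf, Polynomial.eval_smul, smul_eq_mul]
  have hL : PowerSeries.coeff (R := ℂ) n (PowerSeries.C (R := ℂ) A * S)
      = A * ((n.factorial : ℂ)⁻¹ *
          ∑ m ∈ Finset.range (j + 1),
            (j.choose m : ℂ) * (-1 : ℂ) ^ (j - m) * (Y n).eval (m : ℂ)) := by
    have hLS : PowerSeries.coeff (R := ℂ) n S = (n.factorial : ℂ)⁻¹ *
        ∑ m ∈ Finset.range (j + 1),
          (j.choose m : ℂ) * (-1 : ℂ) ^ (j - m) * (Y n).eval (m : ℂ) := by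
      rw [hSdef, map_sum, Finset.mul_sum]
      refine Finset.sum_congr rfl fun m _ => ?_
      rw [PowerSeries.coeff_C_mul, hFcoeff m]
      ring
    rw [PowerSeries.coeff_C_mul, hLS]
  have hR : PowerSeries.coeff (R := ℂ) n (PowerSeries.C (R := ℂ) c * PowerSeries.X ^ k * (exp ℂ - 1) ^ l)
      = c * ((l.factorial : ℂ) * stirling2 p l * (p.factorial : ℂ)⁻¹) := by
    rw [mul_assoc, PowerSeries.coeff_C_mul, PowerSeries.coeff_X_pow_mul', if_pos hn,
      aux_coeff_bin]
  rw [hL, hR] at hcoeff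
  -- final algebra
  have hn0 : ((n.factorial : ℂ)) ≠ 0 := Nat.cast_ne_zero.2 n.factorial_ne_zero
  have hp0 : ((p.factorial : ℂ)) ≠ 0 := Nat.cast_ne_zero.2 p.factorial_ne_zero
  have h2k : ((2 : ℂ) ^ (k - 1)) ≠ 0 := pow_ne_zero _ two_ne_zero
  have hc2 : c = ((2 : ℂ) ^ (k - 1))⁻¹ := by
    rw [hcdef, ← zpow_natCast (2 : ℂ) (k - 1), ← zpow_neg]
    congr 1
    push_cast [Nat.cast_sub hk]
    ring
  have fact1 : ((n.choose k : ℂ)) * (k.factorial : ℂ) * (p.factorial : ℂ)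
      = (n.factorial : ℂ) := by
    rw [hpdef]
    exact_mod_cast Nat.choose_mul_factorial_mul_factorial hn
  have hfin : ∑ m ∈ Finset.range (j + 1),
        (j.choose m : ℂ) * (-1 : ℂ) ^ (j - m) * (Y n).eval (m : ℂ)
      = (n.factorial : ℂ) * (c * ((l.factorial : ℂ) * stirling2 p l *
          (p.factorial : ℂ)⁻¹)) / A := by
    field_simp at hcoeff ⊢
    linear_combination hcoeff
  rw [hfin, hc2]
  field_simp
  linear_combination (-((l.factorial : ℂ) * stirling2 p l)) * fact1
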